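/- If a framed 4-graph contains two edge-disjoint cycles sharing exactly one vertex at which they cross transversally (each cycle passes through the vertex along a pair of opposite half-edges), then it contains Γ as an s-minor; in particular Γ is an s-minor of Δ but not a minor of Δ. -/

import Mathlib

/-! Framed 4-valent graphs, modeled via darts (half-edges). -/

structure FramedGraph : Type 1 where
  /-- darts (half-edges) -/
  D : Type
  /-- vertices -/
  V : Type
  /-- the fixed-point-free involution pairing the two darts of each edge -/
  edge : D → D
  /-- the framing: at each vertex, a fixed-point-free involution pairing each
      half-edge with its opposite half-edge -/
  opp : D → D
  /-- the vertex a dart is attached to -/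
  vert : D → V
  edge_invol : ∀ d, edge (edge d) = d
  edge_ne : ∀ d, edge d ≠ d
  opp_invol : ∀ d, opp (opp d) = d
  opp_ne : ∀ d, opp d ≠ d
  opp_vert : ∀ d, vert (opp d) = vert d
  /-- every vertex has exactly four half-edges -/
  degree_four : ∀ v, Nat.card {d : D // vert d = v} = 4

namespace FramedGraph

/-- Two darts are adjacent in the incidence structure: they span an edge or
share a vertex.  Used to define connectivity. -/
def Adj (G : FramedGraph) (d d' : G.D) : Prop :=
  G.edge d = d' ∨ G.vert d = G.vert d'

def Connected (G : FramedGraph) : Prop :=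
  ∀ d d' : G.D, Relation.ReflTransGen G.Adj d d'

/-- A source-sink structure: an orientation of the edges (`S` is the set of
"incoming" darts, one per edge) such that at every vertex exactly two darts are
incoming and they are opposite to each other. -/
def IsSourceSink (G : FramedGraph) (S : Set G.D) : Prop :=
  (∀ d, d ∈ S ↔ G.edge d ∉ S) ∧
  (∀ v : G.V, ∃ d, G.vert d = v ∧ d ∈ S ∧ G.opp d ∈ S ∧
    ∀ d', G.vert d' = v → d' ∈ S → d' = d ∨ d' = G.opp d)

/-- Following an edge of the smoothed graph: traverse an edge of `G`, and while
arriving at the smoothed vertex `X`, jump along the chosen adjacent pairing `p`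
and continue. (At most two passages through `X` are possible.) -/
noncomputable def smoothEdge (G : FramedGraph) (X : G.V) (p : G.D → G.D) (d : G.D) : G.D := by
  classical
  exact
    if G.vert (G.edge d) ≠ X then G.edge d
    else if G.vert (G.edge (p (G.edge d))) ≠ X then G.edge (p (G.edge d))
    else G.edge (p (G.edge (p (G.edge d))))

/-- `G'` is obtained from `G` by smoothing at the vertex `X`: the four
half-edges at `X` are reconnected into two pairs of adjacent (non-opposite)
half-edges according to an involution `p`, the vertex `X` disappears, and
everything else is untouched. -/
def IsSmoothingAt (G G' : FramedGraph) (X : G.V) : Prop :=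
  ∃ (ι : G'.D → G.D) (p : G.D → G.D),
    Function.Injective ι ∧
    (∀ d, G.vert (ι d) ≠ X) ∧
    (∀ e : G.D, G.vert e ≠ X → ∃ d, ι d = e) ∧
    (∀ d d', G'.vert d = G'.vert d' ↔ G.vert (ι d) = G.vert (ι d')) ∧
    (∀ d, ι (G'.opp d) = G.opp (ι d)) ∧
    (∀ e, G.vert e = X → G.vert (p e) = X ∧ p (p e) = e ∧ p e ≠ e ∧ p e ≠ G.opp e) ∧
    (∀ d, ι (G'.edge d) = G.smoothEdge X p (ι d))

/-- A rotating circuit: a closed walk `d 0, d 1, …` (indices mod `n`)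
traversing every edge exactly once, which at every vertex continues along a
half-edge *adjacent* (neither equal nor opposite) to the arriving half-edge. -/
structure RotatingCircuit (G : FramedGraph) : Type where
  n : ℕ
  pos : 0 < n
  d : ZMod n → G.D
  step_vert : ∀ i, G.vert (d (i + 1)) = G.vert (G.edge (d i))
  step_ne : ∀ i, d (i + 1) ≠ G.edge (d i)
  step_adj : ∀ i, d (i + 1) ≠ G.opp (G.edge (d i))
  once : ∀ e : G.D, ∃! i, d i = e ∨ d i = G.edge e

/-- The circuit is good at `X`: the two passages through `X` arrive along a
pair of opposite half-edges. -/
def GoodAt (G : FramedGraph) (c : RotatingCircuit G) (X : G.V) : Prop :=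
  ∀ i j : ZMod c.n, G.vert (G.edge (c.d i)) = X → G.vert (G.edge (c.d j)) = X →
    i ≠ j → G.edge (c.d j) = G.opp (G.edge (c.d i))

/-- Isomorphism of framed 4-graphs. -/
def Iso (G G' : FramedGraph) : Prop :=
  ∃ (φ : G.D ≃ G'.D) (ψ : G.V ≃ G'.V),
    (∀ d, G'.edge (φ d) = φ (G.edge d)) ∧
    (∀ d, G'.opp (φ d) = φ (G.opp d)) ∧
    (∀ d, G'.vert (φ d) = ψ (G.vert d))

/-- `G'` is obtained from `G` by deleting some connected components. -/
def IsComponentRestriction (G G' : FramedGraph) : Prop :=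
  ∃ ι : G'.D → G.D, Function.Injective ι ∧
    (∀ d, ι (G'.edge d) = G.edge (ι d)) ∧
    (∀ d, ι (G'.opp d) = G.opp (ι d)) ∧
    (∀ d d', G'.vert d = G'.vert d' ↔ G.vert (ι d) = G.vert (ι d')) ∧
    (∀ x y, (∃ d, ι d = x) → G.Adj x y → ∃ d', ι d' = y)

/-- `G'` is a minor of `G`: obtained (up to isomorphism) by a sequence of
smoothings at vertices and deletions of connected components. -/
def MinorOf (G' G : FramedGraph) : Prop :=
  ∃ G'' : FramedGraph,
    Relation.ReflTransGen
      (fun A B => (∃ X : A.V, A.IsSmoothingAt B X) ∨ A.IsComponentRestriction B) G G'' ∧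
    G''.Iso G'

/-- Degree of a vertex in the subgraph with dart set `S`. -/
noncomputable def sdeg (G : FramedGraph) (S : Set G.D) (v : G.V) : ℕ :=
  Nat.card {d : G.D // G.vert d = v ∧ d ∈ S}

/-- `v` is a full (degree-4) vertex of the subgraph `S`. -/
def Full (G : FramedGraph) (S : Set G.D) (v : G.V) : Prop :=
  ∀ d, G.vert d = v → d ∈ S

/-- One step of suppressing a valency-2 vertex: from dart `a` cross its edge,
arrive at a vertex of valency 2 in `S`, and continue along the other dart of
`S` there. -/
def PassThrough (G : FramedGraph) (S : Set G.D) (a b : G.D) : Prop :=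
  G.edge a ∈ S ∧ sdeg G S (G.vert (G.edge a)) = 2 ∧ b ∈ S ∧ b ≠ G.edge a ∧
    G.vert b = G.vert (G.edge a)

/-- `G'` is an s-minor of `G`: pass to a subgraph `S` all of whose vertices
have even valency, suppress all valency-2 vertices (and vertexless circles),
and delete connected components (subsumed in the choice of `S`). -/
def SMinorOf (G' G : FramedGraph) : Prop :=
  ∃ (S : Set G.D) (ι : G'.D → G.D),
    (∀ d ∈ S, G.edge d ∈ S) ∧
    (∀ v, Even (sdeg G S v)) ∧
    Function.Injective ι ∧
    (∀ d, ι d ∈ S ∧ Full G S (G.vert (ι d))) ∧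
    (∀ e ∈ S, Full G S (G.vert e) → ∃ d, ι d = e) ∧
    (∀ d d', G'.vert d = G'.vert d' ↔ G.vert (ι d) = G.vert (ι d')) ∧
    (∀ d, ι (G'.opp d) = G.opp (ι d)) ∧
    (∀ d, ∃ e, Relation.ReflTransGen (PassThrough G S) (ι d) e ∧ G.edge e ∈ S ∧
      Full G S (G.vert (G.edge e)) ∧ ι (G'.edge d) = G.edge e)

/-- A closed trail: a closed walk using every edge at most once (a cycle in
the sense of a closed curve in the graph). -/
def IsClosedTrail (G : FramedGraph) (m : ℕ) (f : ZMod m → G.D) : Prop :=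
  0 < m ∧ (∀ i, G.vert (f (i + 1)) = G.vert (G.edge (f i))) ∧
  (∀ i j, (f i = f j ∨ f i = G.edge (f j)) → i = j)

/-- The closed trail passes through `X` exactly once, and transversally:
it leaves `X` along the half-edge opposite to the one along which it arrived. -/
def PassesOnceTransversally (G : FramedGraph) (m : ℕ) (f : ZMod m → G.D) (X : G.V) : Prop :=
  (∃! i : ZMod m, G.vert (f i) = X) ∧
  (∀ i, G.vert (f i) = X → f i = G.opp (G.edge (f (i - 1))))

end FramedGraph

open FramedGraph

/-! Framed chord diagrams. -/

structure FramedChordDiagram : Type where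
  /-- number of chords; the core circle carries `2*n` endpoints, in cyclic
  order given by `Fin (2*n)` -/
  n : ℕ
  /-- the pairing of endpoints into chords -/
  mate : Fin (2 * n) → Fin (2 * n)
  mate_invol : ∀ i, mate (mate i) = i
  mate_ne : ∀ i, mate i ≠ i
  /-- the framing of the chord at each endpoint -/
  fr : Fin (2 * n) → Bool
  fr_mate : ∀ i, fr (mate i) = fr i

namespace FramedChordDiagram

/-- `x` lies strictly between `u` and `v` on the linear order. -/
def Between {m : ℕ} (u v x : Fin m) : Prop := min u v < x ∧ x < max u v

/-- The endpoints `i` and `j` belong to two distinct chords. -/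
def DistinctChords (D : FramedChordDiagram) (i j : Fin (2 * D.n)) : Prop :=
  j ≠ i ∧ j ≠ D.mate i

/-- The chords of `i` and `j` are linked: the two endpoints of the chord of `j`
lie in different connected components of the core circle with the endpoints of
the chord of `i` removed. -/
def Linked (D : FramedChordDiagram) (i j : Fin (2 * D.n)) : Prop :=
  DistinctChords D i j ∧
    ¬ (Between i (D.mate i) j ↔ Between i (D.mate i) (D.mate j))

/-- The endpoints of the two chords alternate around the circle:
a, b, a, b. -/
def Alternate (D : FramedChordDiagram) (i j : Fin (2 * D.n)) : Prop :=
  (min i (D.mate i) < min j (D.mate j) ∧ min j (D.mate j) < max i (D.mate i) ∧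
     max i (D.mate i) < max j (D.mate j)) ∨
  (min j (D.mate j) < min i (D.mate i) ∧ min i (D.mate i) < max j (D.mate j) ∧
     max j (D.mate j) < max i (D.mate i))

/-- `D'` is a subdiagram of `D`: obtained by deleting some chords
(framings respected). -/
def Subdiagram (D' D : FramedChordDiagram) : Prop :=
  ∃ ι : Fin (2 * D'.n) → Fin (2 * D.n), StrictMono ι ∧
    (∀ i, ι (D'.mate i) = D.mate (ι i)) ∧
    (∀ i, D'.fr i = D.fr (ι i))

/-- The graph `H` on the chords of `D`: two (distinct) chords are joined iff
they are linked and at least one has framing `0`, or they are unlinked and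
both have framing `1`.  (Stated on endpoints; it is mate-invariant.) -/
def Hadj (D : FramedChordDiagram) (i j : Fin (2 * D.n)) : Prop :=
  DistinctChords D i j ∧
    ((Linked D i j ∧ (D.fr i = false ∨ D.fr j = false)) ∨
     (¬ Linked D i j ∧ D.fr i = true ∧ D.fr j = true))

end FramedChordDiagram

open FramedChordDiagram

/-- The relation `adj` admits an odd cycle. -/
def HasOddCycle {α : Type*} (adj : α → α → Prop) : Prop :=
  ∃ (m : ℕ) (f : ZMod m → α), Odd m ∧ Function.Injective f ∧ ∀ i, adj (f i) (f (i + 1))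

/-- The rotating circuit `c` of `G` realizes the framed chord diagram `D`
(with offset `k` matching endpoints of `D` with steps of `c`): endpoints are
mated iff the corresponding passages of `c` arrive at the same vertex, and a
chord has framing `0` iff that vertex is good (the two arrivals are along
opposite half-edges). -/
def RealizesWith (G : FramedGraph) (c : RotatingCircuit G) (D : FramedChordDiagram)
    (k : ℕ) : Prop :=
  c.n = 2 * D.n ∧
  (∀ i j : Fin (2 * D.n), i ≠ j →
    (D.mate i = j ↔
      G.vert (G.edge (c.d (((i : ℕ) + k : ℕ) : ZMod c.n))) =
        G.vert (G.edge (c.d (((j : ℕ) + k : ℕ) : ZMod c.n))))) ∧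
  (∀ i : Fin (2 * D.n),
    (D.fr i = false ↔
      G.edge (c.d ((((D.mate i : ℕ) + k : ℕ)) : ZMod c.n)) =
        G.opp (G.edge (c.d (((i : ℕ) + k : ℕ) : ZMod c.n)))))

def Realizes (G : FramedGraph) (c : RotatingCircuit G) (D : FramedChordDiagram) : Prop :=
  ∃ k : ℕ, RealizesWith G c D k

/-- `G` is (a copy of) the framed 4-graph `G(D)` obtained from the framed
chord diagram `D`. -/
def GraphOf (D : FramedChordDiagram) (G : FramedGraph) : Prop :=
  ∃ c : RotatingCircuit G, Realizes G c D

/-! Concrete graphs: `Γ` and `Δ`. -/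

/-- The dart-pairing of `Γ`: darts `0,1` form one loop, darts `2,3` the other. -/
def gammaedge (d : ZMod 4) : ZMod 4 := if d.val % 2 = 0 then d + 1 else d - 1

/-- The graph `Γ`: one vertex, two loops, each loop opposite to itself
(its two half-edges form an opposite pair). -/
def GammaGraph : FramedGraph where
  D := ZMod 4
  V := Fin 1
  edge := gammaedge
  opp := gammaedge
  vert := fun _ => 0
  edge_invol := by decide
  edge_ne := by decide
  opp_invol := by decide
  opp_ne := by decide
  opp_vert := by decide
  degree_four := by
    intro v
    rw [Nat.card_eq_fintype_card]
    revert v; decide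

def deltaedge (d : ZMod 12) : ZMod 12 := if d.val % 2 = 0 then d + 1 else d - 1

def deltavert (d : ZMod 12) : ZMod 3 := ((d.val / 2 + d.val % 2 : ℕ) : ZMod 3)

/-- The graph `Δ`: the framed 4-graph of the chord diagram with three pairwise
linked chords of framing `0` (three vertices `0,1,2`, six edges, traversed in
the cyclic vertex order `0,1,2,0,1,2`). -/
def DeltaGraph : FramedGraph where
  D := ZMod 12
  V := ZMod 3
  edge := deltaedge
  opp := fun d => d + 6
  vert := deltavert
  edge_invol := by decide
  edge_ne := by decide
  opp_invol := by decide
  opp_ne := by decide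
  opp_vert := by decide
  degree_four := by
    intro v
    rw [Nat.card_eq_fintype_card]
    revert v; decide

/-- The framed chord diagram with a single chord, of framing `1`. -/
def D1 : FramedChordDiagram where
  n := 1
  mate := fun i => ⟨1 - i.val, by omega⟩
  mate_invol := by decide
  mate_ne := by decide
  fr := fun _ => true
  fr_mate := by decide


section CardHelpers

lemma card_subtype_zero {T : Type} {p : T → Prop} (h : ∀ z, ¬ p z) :
    Nat.card {z // p z} = 0 := by
  have : IsEmpty {z // p z} := ⟨fun z => h z z.2⟩
  exact Nat.card_of_isEmpty

lemma card_subtype_two {T : Type} {p : T → Prop} (x y : T) (hxy : x ≠ y)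
    (hx : p x) (hy : p y) (h : ∀ z, p z → z = x ∨ z = y) :
    Nat.card {z // p z} = 2 := by
  classical
  have e : {z // p z} ≃ Fin 2 :=
    { toFun := fun z => if z.1 = x then 0 else 1
      invFun := fun i => if i = 0 then ⟨x, hx⟩ else ⟨y, hy⟩
      left_inv := by
        rintro ⟨z, hz⟩
        rcases h z hz with rfl | rfl
        · simp
        · simp [Ne.symm hxy, hxy]
      right_inv := by
        intro i
        fin_cases i
        · simp
        · simp [Ne.symm hxy, hxy] }
  rw [Nat.card_congr e, Nat.card_eq_fintype_card, Fintype.card_fin]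

lemma card_subtype_four {T : Type} {p : T → Prop} (a b c d : T)
    (hab : a ≠ b) (hac : a ≠ c) (had : a ≠ d) (hbc : b ≠ c) (hbd : b ≠ d) (hcd : c ≠ d)
    (ha : p a) (hb : p b) (hc : p c) (hd : p d)
    (h : ∀ z, p z → z = a ∨ z = b ∨ z = c ∨ z = d) :
    Nat.card {z // p z} = 4 := by
  classical
  have e : {z // p z} ≃ Fin 4 :=
    { toFun := fun z => if z.1 = a then 0 else if z.1 = b then 1 else if z.1 = c then 2 else 3
      invFun := fun i => if i = 0 then ⟨a, ha⟩ else if i = 1 then ⟨b, hb⟩ else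
        if i = 2 then ⟨c, hc⟩ else ⟨d, hd⟩
      left_inv := by
        rintro ⟨z, hz⟩
        rcases h z hz with rfl | rfl | rfl | rfl
        · simp
        · simp [Ne.symm hab]
        · simp [Ne.symm hac, Ne.symm hbc]
        · simp [Ne.symm had, Ne.symm hbd, Ne.symm hcd]
      right_inv := by
        intro i
        fin_cases i
        · simp
        · simp [Ne.symm hab]
        · simp [Ne.symm hac, Ne.symm hbc]
        · simp [Ne.symm had, Ne.symm hbd, Ne.symm hcd] }
  rw [Nat.card_congr e, Nat.card_eq_fintype_card, Fintype.card_fin]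

lemma exists_ne_ne {T : Type} (h4 : Nat.card T = 4) (x y : T) :
    ∃ z : T, z ≠ x ∧ z ≠ y := by
  classical
  by_contra hcon
  push_neg at hcon
  have hfin : Finite T := Nat.finite_of_card_ne_zero (by omega)
  have hinj : Function.Injective (fun z : T => if z = x then (0 : Fin 2) else 1) := by
    intro u v huv
    by_cases hu : u = x <;> by_cases hv : v = x <;> simp_all
    exact (hcon u hu).trans (hcon v hv).symm
  have := Nat.card_le_card_of_injective _ hinj
  simp [Nat.card_eq_fintype_card] at this
  omega

lemma four_cover {T : Type} (h4 : Nat.card T = 4) (a b c d : T)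
    (hab : a ≠ b) (hac : a ≠ c) (had : a ≠ d) (hbc : b ≠ c) (hbd : b ≠ d) (hcd : c ≠ d) :
    ∀ z : T, z = a ∨ z = b ∨ z = c ∨ z = d := by
  classical
  by_contra hcon
  push_neg at hcon
  obtain ⟨z, hza, hzb, hzc, hzd⟩ := hcon
  have hfin : Finite T := Nat.finite_of_card_ne_zero (by omega)
  have hinj : Function.Injective (![a, b, c, d, z] : Fin 5 → T) := by
    intro i j hij
    fin_cases i <;> fin_cases j <;> simp_all
  have := Nat.card_le_card_of_injective _ hinj
  simp [Nat.card_eq_fintype_card] at this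
  omega

end CardHelpers

namespace FramedGraph

lemma sss_at (G : FramedGraph) {S : Set G.D} (h : G.IsSourceSink S) {c : G.D} {X : G.V}
    (hc : G.vert c = X) {p : G.D → G.D}
    (hp : ∀ e, G.vert e = X → G.vert (p e) = X ∧ p (p e) = e ∧ p e ≠ e ∧ p e ≠ G.opp e) :
    (c ∈ S ↔ p c ∉ S) := by
  obtain ⟨a, haX, haS, haoS, huniq⟩ := h.2 X
  obtain ⟨hpX, hpp, hpne, hpno⟩ := hp c hc
  constructor
  · intro hcS hpS
    rcases huniq (p c) hpX hpS with h1 | h1 <;> rcases huniq c hc hcS with h0 | h0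
    · exact hpne (h1.trans h0.symm)
    · exact hpno (h1.trans (by rw [h0, G.opp_invol]))
    · exact hpno (h1.trans (congrArg G.opp h0.symm))
    · exact hpne (h1.trans h0.symm)
  · intro hpns
    by_contra hcns
    have hca : c ≠ a := fun h => hcns (h ▸ haS)
    have hcoa : c ≠ G.opp a := fun h => hcns (h ▸ haoS)
    have h4 := G.degree_four X
    have hoaX : G.vert (G.opp a) = X := by rw [G.opp_vert]; exact haX
    have hocX : G.vert (G.opp c) = X := by rw [G.opp_vert]; exact hc
    have hcover := four_cover h4 (⟨a, haX⟩ : {d : G.D // G.vert d = X})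
      ⟨G.opp a, hoaX⟩ ⟨c, hc⟩ ⟨G.opp c, hocX⟩
      (by simp only [ne_eq, Subtype.mk.injEq]; exact fun h => G.opp_ne a h.symm)
      (by simp only [ne_eq, Subtype.mk.injEq]; exact fun h => hca h.symm)
      (by simp only [ne_eq, Subtype.mk.injEq]; intro h
          exact hcoa ((congrArg G.opp h).trans (G.opp_invol c)).symm)
      (by simp only [ne_eq, Subtype.mk.injEq]; exact fun h => hcoa h.symm)
      (by simp only [ne_eq, Subtype.mk.injEq]; intro h
          have h2 := congrArg G.opp h
          rw [G.opp_invol, G.opp_invol] at h2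
          exact hca h2.symm)
      (by simp only [ne_eq, Subtype.mk.injEq]; exact fun h => G.opp_ne c h.symm)
    rcases hcover ⟨p c, hpX⟩ with h1 | h1 | h1 | h1 <;>
      rw [Subtype.mk.injEq] at h1
    · exact hpns (h1 ▸ haS)
    · exact hpns (h1 ▸ haoS)
    · exact hpne h1
    · exact hpno h1

lemma sss_smoothing {G G' : FramedGraph} {X : G.V} (h : G.IsSmoothingAt G' X)
    (hS : ∃ S, G.IsSourceSink S) : ∃ S', G'.IsSourceSink S' := by
  classical
  obtain ⟨S, hS⟩ := hS
  obtain ⟨ι, p, hinj, hnX, hsurj, hvert, hopp, hp, hedge⟩ := h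
  refine ⟨{d | ι d ∈ S}, ?_, ?_⟩
  · intro d
    have he := hedge d
    unfold smoothEdge at he
    simp only [Set.mem_setOf_eq]
    split_ifs at he with h1 h2
    · rw [he]
      exact hS.1 (ι d)
    · push_neg at h1
      rw [he]
      have i1 := hS.1 (ι d)
      have i2 := sss_at G hS h1 hp
      have i3 := hS.1 (p (G.edge (ι d)))
      tauto
    · push_neg at h1 h2
      rw [he]
      have i1 := hS.1 (ι d)
      have i2 := sss_at G hS h1 hp
      have i3 := hS.1 (p (G.edge (ι d)))
      have i4 := sss_at G hS h2 hp
      have i5 := hS.1 (p (G.edge (p (G.edge (ι d)))))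
      tauto
  · intro v'
    have h4 := G'.degree_four v'
    have hne : Nonempty {d : G'.D // G'.vert d = v'} := by
      by_contra hcon
      rw [not_nonempty_iff] at hcon
      rw [Nat.card_of_isEmpty] at h4
      omega
    obtain ⟨⟨d0, hd0⟩⟩ := hne
    obtain ⟨a, hav, haS, haoS, huniq⟩ := hS.2 (G.vert (ι d0))
    have hane : G.vert a ≠ X := by rw [hav]; exact hnX d0
    obtain ⟨da, hda⟩ := hsurj a hane
    refine ⟨da, ?_, ?_, ?_, ?_⟩
    · rw [← hd0]
      exact (hvert da d0).2 (by rw [hda, hav])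
    · simp only [Set.mem_setOf_eq, hda]; exact haS
    · simp only [Set.mem_setOf_eq, hopp, hda]; exact haoS
    · intro d' hd' hd'S
      simp only [Set.mem_setOf_eq] at hd'S
      have hv : G.vert (ι d') = G.vert a := by
        rw [← hda]
        exact (hvert d' da).1 (by rw [hd', ← hd0]; exact ((hvert da d0).2 (by rw [hda, hav])).symm)
      rcases huniq (ι d') (by rw [hv, hav]) hd'S with h1 | h1
      · left; exact hinj (h1.trans hda.symm)
      · right; apply hinj; rw [hopp, hda]; exact h1

lemma sss_restrict {G G' : FramedGraph} (h : G.IsComponentRestriction G')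
    (hS : ∃ S, G.IsSourceSink S) : ∃ S', G'.IsSourceSink S' := by
  obtain ⟨S, hS⟩ := hS
  obtain ⟨ι, hinj, hedge, hopp, hvert, hclosed⟩ := h
  refine ⟨{d | ι d ∈ S}, ?_, ?_⟩
  · intro d
    simp only [Set.mem_setOf_eq, hedge]
    exact hS.1 (ι d)
  · intro v'
    have h4 := G'.degree_four v'
    have hne : Nonempty {d : G'.D // G'.vert d = v'} := by
      by_contra hcon
      rw [not_nonempty_iff] at hcon
      rw [Nat.card_of_isEmpty] at h4
      omega
    obtain ⟨⟨d0, hd0⟩⟩ := hne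
    obtain ⟨a, hav, haS, haoS, huniq⟩ := hS.2 (G.vert (ι d0))
    obtain ⟨da, hda⟩ := hclosed (ι d0) a ⟨d0, rfl⟩ (Or.inr hav.symm)
    refine ⟨da, ?_, ?_, ?_, ?_⟩
    · rw [← hd0]
      exact (hvert da d0).2 (by rw [hda, hav])
    · simp only [Set.mem_setOf_eq, hda]; exact haS
    · simp only [Set.mem_setOf_eq, hopp, hda]; exact haoS
    · intro d' hd' hd'S
      simp only [Set.mem_setOf_eq] at hd'S
      have hv : G.vert (ι d') = G.vert a := by
        rw [← hda]
        exact (hvert d' da).1 (by rw [hd', ← hd0]; exact ((hvert da d0).2 (by rw [hda, hav])).symm)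
      rcases huniq (ι d') (by rw [hv, hav]) hd'S with h1 | h1
      · left; exact hinj (h1.trans hda.symm)
      · right; apply hinj; rw [hopp, hda]; exact h1

lemma sss_iso {G G' : FramedGraph} (h : G.Iso G') (hS : ∃ S, G.IsSourceSink S) :
    ∃ S', G'.IsSourceSink S' := by
  obtain ⟨S, hS⟩ := hS
  obtain ⟨φ, ψ, hedge, hopp, hvert⟩ := h
  refine ⟨{d | φ.symm d ∈ S}, ?_, ?_⟩
  · intro d
    simp only [Set.mem_setOf_eq]
    have he : φ.symm (G'.edge d) = G.edge (φ.symm d) := by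
      have := hedge (φ.symm d)
      rw [Equiv.apply_symm_apply] at this
      rw [this, Equiv.symm_apply_apply]
    rw [he]
    exact hS.1 (φ.symm d)
  · intro v'
    obtain ⟨a, hav, haS, haoS, huniq⟩ := hS.2 (ψ.symm v')
    refine ⟨φ a, ?_, ?_, ?_, ?_⟩
    · rw [hvert, hav, Equiv.apply_symm_apply]
    · simp only [Set.mem_setOf_eq, Equiv.symm_apply_apply]; exact haS
    · simp only [Set.mem_setOf_eq, hopp, Equiv.symm_apply_apply]; exact haoS
    · intro d' hd' hd'S
      simp only [Set.mem_setOf_eq] at hd'S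
      have hv : G.vert (φ.symm d') = ψ.symm v' := by
        have h1 := hvert (φ.symm d')
        rw [Equiv.apply_symm_apply] at h1
        exact (Equiv.eq_symm_apply ψ).2 (h1.symm.trans hd')
      rcases huniq (φ.symm d') hv hd'S with h1 | h1
      · left; rw [← h1, Equiv.apply_symm_apply]
      · right; rw [hopp, ← h1, Equiv.apply_symm_apply]

end FramedGraph

def deltaSSS : Set (ZMod 12) := {d | d.val % 2 = 1}

lemma delta_has_sss : ∃ S, DeltaGraph.IsSourceSink S := by
  refine ⟨deltaSSS, ?_, ?_⟩
  · show ∀ d : ZMod 12, d.val % 2 = 1 ↔ ¬ (deltaedge d).val % 2 = 1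
    decide
  · show ∀ v : ZMod 3, ∃ d : ZMod 12, deltavert d = v ∧ d.val % 2 = 1 ∧
      (d + 6).val % 2 = 1 ∧
      ∀ d' : ZMod 12, deltavert d' = v → d'.val % 2 = 1 → d' = d ∨ d' = d + 6
    decide

lemma gamma_no_sss : ¬ ∃ S, GammaGraph.IsSourceSink S := by
  rintro ⟨S, h1, h2⟩
  obtain ⟨d, -, hdS, hoS, -⟩ := h2 (GammaGraph.vert (show GammaGraph.D from (0 : ZMod 4)))
  exact (h1 d).1 hdS hoS

lemma sss_chain {A B : FramedGraph}
    (h : Relation.ReflTransGen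
      (fun A B => (∃ X : A.V, A.IsSmoothingAt B X) ∨ A.IsComponentRestriction B) A B)
    (hS : ∃ S, A.IsSourceSink S) : ∃ S, B.IsSourceSink S := by
  induction h with
  | refl => exact hS
  | tail _ hbc ih =>
    rcases hbc with ⟨X, hsm⟩ | hcr
    · exact FramedGraph.sss_smoothing hsm ih
    · exact FramedGraph.sss_restrict hcr ih

lemma not_minor_gamma_delta : ¬ MinorOf GammaGraph DeltaGraph := by
  rintro ⟨G'', hchain, hiso⟩
  exact gamma_no_sss (FramedGraph.sss_iso hiso (sss_chain hchain delta_has_sss))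


/-! Part 2: `Γ` is an s-minor of `Δ`. -/

def deltaS : Set (ZMod 12) := {d | d.val ≠ 2 ∧ d.val ≠ 3 ∧ d.val ≠ 8 ∧ d.val ≠ 9}

instance (d : ZMod 12) : Decidable (d ∈ deltaS) :=
  inferInstanceAs (Decidable (d.val ≠ 2 ∧ d.val ≠ 3 ∧ d.val ≠ 8 ∧ d.val ≠ 9))

instance : Fintype GammaGraph.D := inferInstanceAs (Fintype (ZMod 4))
instance : OfNat GammaGraph.D 0 := inferInstanceAs (OfNat (ZMod 4) 0)
instance : OfNat GammaGraph.D 1 := inferInstanceAs (OfNat (ZMod 4) 1)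
instance : OfNat GammaGraph.D 2 := inferInstanceAs (OfNat (ZMod 4) 2)
instance : OfNat GammaGraph.D 3 := inferInstanceAs (OfNat (ZMod 4) 3)
instance : DecidableEq GammaGraph.D := inferInstanceAs (DecidableEq (ZMod 4))
instance : Fintype DeltaGraph.D := inferInstanceAs (Fintype (ZMod 12))
instance : DecidableEq DeltaGraph.D := inferInstanceAs (DecidableEq (ZMod 12))
instance : DecidableEq DeltaGraph.V := inferInstanceAs (DecidableEq (ZMod 3))
instance : DecidableEq GammaGraph.V := inferInstanceAs (DecidableEq (Fin 1))

def deltaIota : ZMod 4 → ZMod 12 :=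
  fun d => if d = 0 then 0 else if d = 1 then 6 else if d = 2 then 5 else 11

lemma delta_sdeg (v : ZMod 3) :
    FramedGraph.sdeg DeltaGraph deltaS v = if v = 0 then 4 else 2 := by
  have h3 : ∀ w : ZMod 3, w = 0 ∨ w = 1 ∨ w = 2 := by decide
  rcases h3 v with rfl | rfl | rfl
  · rw [if_pos rfl]
    show Nat.card {d : ZMod 12 // deltavert d = (0 : ZMod 3) ∧ d ∈ deltaS} = 4
    exact card_subtype_four 0 5 6 11 (by decide) (by decide) (by decide) (by decide)
      (by decide) (by decide) (by decide) (by decide) (by decide) (by decide) (by decide)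
  · rw [if_neg (by decide)]
    show Nat.card {d : ZMod 12 // deltavert d = (1 : ZMod 3) ∧ d ∈ deltaS} = 2
    exact card_subtype_two 1 7 (by decide) (by decide) (by decide) (by decide)
  · rw [if_neg (by decide)]
    show Nat.card {d : ZMod 12 // deltavert d = (2 : ZMod 3) ∧ d ∈ deltaS} = 2
    exact card_subtype_two 4 10 (by decide) (by decide) (by decide) (by decide)

lemma sminor_gamma_delta : SMinorOf GammaGraph DeltaGraph := by
  have pt : ∀ a b : ZMod 12, deltaedge a ∈ deltaS →
      deltavert (deltaedge a) ≠ (0 : ZMod 3) → b ∈ deltaS →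
      b ≠ deltaedge a → deltavert b = deltavert (deltaedge a) →
      FramedGraph.PassThrough DeltaGraph deltaS a b := by
    intro a b h1 h2 h3 h4 h5
    refine ⟨h1, ?_, h3, h4, h5⟩
    show FramedGraph.sdeg DeltaGraph deltaS (deltavert (deltaedge a)) = 2
    rw [delta_sdeg (deltavert (deltaedge a))]
    exact if_neg h2
  refine ⟨deltaS, deltaIota, ?_, ?_, ?_, ?_, ?_, ?_, ?_, ?_⟩
  · show ∀ d : ZMod 12, d ∈ deltaS → deltaedge d ∈ deltaS
    decide
  · intro v
    have h3 : ∀ w : ZMod 3, w = 0 ∨ w = 1 ∨ w = 2 := by decide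
    rcases h3 v with h | h | h <;> rw [h, delta_sdeg] <;> decide
  · show Function.Injective deltaIota
    decide
  · show ∀ d : ZMod 4, deltaIota d ∈ deltaS ∧
      ∀ d' : ZMod 12, deltavert d' = deltavert (deltaIota d) → d' ∈ deltaS
    decide
  · show ∀ e : ZMod 12, e ∈ deltaS →
      (∀ d' : ZMod 12, deltavert d' = deltavert e → d' ∈ deltaS) →
      ∃ d : ZMod 4, deltaIota d = e
    decide
  · show ∀ d d' : ZMod 4, (0 : Fin 1) = 0 ↔ deltavert (deltaIota d) = deltavert (deltaIota d')
    decide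
  · show ∀ d : ZMod 4, deltaIota (gammaedge d) = deltaIota d + 6
    decide
  · intro d
    have h4 : ∀ w : ZMod 4, w = 0 ∨ w = 1 ∨ w = 2 ∨ w = 3 := by decide
    rcases h4 d with rfl | rfl | rfl | rfl
    · refine ⟨(7 : ZMod 12), Relation.ReflTransGen.single
        (pt _ 7 (by decide) (by decide) (by decide) (by decide) (by decide)),
        (show deltaedge (7 : ZMod 12) ∈ deltaS by decide), ?_,
          by show deltaIota (gammaedge 0) = deltaedge 7; decide⟩
      show ∀ d' : ZMod 12, deltavert d' = deltavert (deltaedge 7) → d' ∈ deltaS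
      decide
    · refine ⟨(1 : ZMod 12), Relation.ReflTransGen.single
        (pt _ 1 (by decide) (by decide) (by decide) (by decide) (by decide)),
        (show deltaedge (1 : ZMod 12) ∈ deltaS by decide), ?_,
          by show deltaIota (gammaedge 1) = deltaedge 1; decide⟩
      show ∀ d' : ZMod 12, deltavert d' = deltavert (deltaedge 1) → d' ∈ deltaS
      decide
    · refine ⟨(10 : ZMod 12), Relation.ReflTransGen.single
        (pt _ 10 (by decide) (by decide) (by decide) (by decide) (by decide)),
        (show deltaedge (10 : ZMod 12) ∈ deltaS by decide), ?_,
          by show deltaIota (gammaedge 2) = deltaedge 10; decide⟩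
      show ∀ d' : ZMod 12, deltavert d' = deltavert (deltaedge 10) → d' ∈ deltaS
      decide
    · refine ⟨(4 : ZMod 12), Relation.ReflTransGen.single
        (pt _ 4 (by decide) (by decide) (by decide) (by decide) (by decide)),
        (show deltaedge (4 : ZMod 12) ∈ deltaS by decide), ?_,
          by show deltaIota (gammaedge 3) = deltaedge 4; decide⟩
      show ∀ d' : ZMod 12, deltavert d' = deltavert (deltaedge 4) → d' ∈ deltaS
      decide


/-! Part 1: the general statement. -/

lemma natCast_zero_iff {n t : ℕ} (ht : t < n) : ((t : ℕ) : ZMod n) = 0 ↔ t = 0 := by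
  constructor
  · intro h
    exact Nat.eq_zero_of_dvd_of_lt ((ZMod.natCast_eq_zero_iff t n).1 h) ht
  · rintro rfl; simp

lemma natCast_pred {n : ℕ} (hn : 0 < n) : ((n - 1 : ℕ) : ZMod n) = 0 - 1 := by
  haveI : NeZero n := ⟨hn.ne'⟩
  rw [eq_sub_iff_add_eq,
    show ((n - 1 : ℕ) : ZMod n) + 1 = (((n - 1) + 1 : ℕ) : ZMod n) from by push_cast; ring,
    show (n - 1) + 1 = n from by omega, ZMod.natCast_self]

lemma zmod_val_succ {n : ℕ} (hn : 2 ≤ n) (k : ZMod n) :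
    (k + 1).val = if k.val + 1 = n then 0 else k.val + 1 := by
  haveI : NeZero n := ⟨by omega⟩
  have h1 : (1 : ZMod n).val = 1 := by
    rw [show (1 : ZMod n) = ((1 : ℕ) : ZMod n) from by push_cast; ring, ZMod.val_cast_of_lt hn]
  rw [ZMod.val_add, h1]
  have hk := ZMod.val_lt k
  split_ifs with h
  · rw [h, Nat.mod_self]
  · exact Nat.mod_eq_of_lt (by omega)

namespace FramedGraph

variable {G : FramedGraph}

lemma trail_shift {m : ℕ} {f : ZMod m → G.D} {X : G.V}
    (hf : IsClosedTrail G m f) (hX : PassesOnceTransversally G m f X) :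
    ∃ (c : ZMod m) (f₁ : ZMod m → G.D), (∀ k, f₁ k = f (k + c)) ∧
      IsClosedTrail G m f₁ ∧ PassesOnceTransversally G m f₁ X ∧
      (∀ y, G.vert (f₁ y) = X ↔ y = 0) := by
  obtain ⟨hm, hstep, hinj⟩ := hf
  obtain ⟨⟨i₀, hi₀, hu⟩, htr⟩ := hX
  have h0X : G.vert (f (0 + i₀)) = X := by rw [zero_add]; exact hi₀
  have huniq : ∀ y : ZMod m, G.vert (f (y + i₀)) = X → y = 0 := by
    intro y hy
    have h1 := hu (y + i₀) hy
    have : y + i₀ = 0 + i₀ := by rw [h1, zero_add]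
    exact add_right_cancel this
  refine ⟨i₀, fun k => f (k + i₀), fun k => rfl, ⟨hm, ?_, ?_⟩, ⟨⟨0, h0X, huniq⟩, ?_⟩, ?_⟩
  · intro i
    have := hstep (i + i₀)
    rw [show i + i₀ + 1 = i + 1 + i₀ from by ring] at this
    exact this
  · intro i j h
    exact add_right_cancel (hinj (i + i₀) (j + i₀) h)
  · intro i hi
    have := htr (i + i₀) hi
    rw [show i + i₀ - 1 = i - 1 + i₀ from by ring] at this
    exact this
  · intro y
    exact ⟨huniq y, fun hy => by rw [hy]; exact h0X⟩

lemma trail_shorten {m : ℕ} {f : ZMod m → G.D} {X : G.V}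
    (hf : IsClosedTrail G m f) (hX : PassesOnceTransversally G m f X)
    {i j : ZMod m} (hij : i ≠ j) (hv : G.vert (f i) = G.vert (f j)) :
    ∃ (m' : ℕ) (f' : ZMod m' → G.D), m' < m ∧ IsClosedTrail G m' f' ∧
      PassesOnceTransversally G m' f' X ∧ (∀ k, ∃ i, f' k = f i) := by
  classical
  have hm : 0 < m := hf.1
  haveI : NeZero m := ⟨hm.ne'⟩
  obtain ⟨c, f₁, hpt, ⟨hm1, hstep1, hinj1⟩, ⟨_, htr1⟩, hu0⟩ := trail_shift hf hX
  -- transfer the repetition to f₁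
  have hvi : G.vert (f₁ (i - c)) = G.vert (f₁ (j - c)) := by
    rw [hpt (i - c), hpt (j - c), show i - c + c = i from by ring,
      show j - c + c = j from by ring]
    exact hv
  have huw : (i - c) ≠ (j - c) := fun h => hij (by
    have := congrArg (· + c) h
    simpa [sub_add_cancel] using this)
  have hu0' : i - c ≠ 0 := by
    intro h
    have h1 : G.vert (f₁ (j - c)) = X := by
      rw [← hvi, h]
      exact (hu0 0).2 rfl
    exact huw (h.trans ((hu0 (j - c)).1 h1).symm)
  have hw0' : j - c ≠ 0 := by
    intro h
    have h1 : G.vert (f₁ (i - c)) = X := by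
      rw [hvi, h]
      exact (hu0 0).2 rfl
    exact huw (((hu0 (i - c)).1 h1).trans h.symm)
  -- extract natural-number indices a < b
  obtain ⟨a, b, ha1, hab, hb, hrep⟩ : ∃ a b : ℕ, 1 ≤ a ∧ a < b ∧ b < m ∧
      G.vert (f₁ ((a : ℕ) : ZMod m)) = G.vert (f₁ ((b : ℕ) : ZMod m)) := by
    have hvne : (i - c).val ≠ (j - c).val := fun h => huw (ZMod.val_injective m h)
    have hv1 : (i - c).val ≠ 0 := fun h => hu0' ((ZMod.val_eq_zero _).1 h)
    have hv2 : (j - c).val ≠ 0 := fun h => hw0' ((ZMod.val_eq_zero _).1 h)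
    rcases Nat.lt_or_ge (i - c).val (j - c).val with hlt | hge
    · exact ⟨(i - c).val, (j - c).val, by omega, hlt, ZMod.val_lt _,
        by rw [ZMod.natCast_rightInverse (i - c), ZMod.natCast_rightInverse (j - c)]; exact hvi⟩
    · exact ⟨(j - c).val, (i - c).val, by omega, by omega, ZMod.val_lt _,
        by rw [ZMod.natCast_rightInverse (i - c), ZMod.natCast_rightInverse (j - c)]; exact hvi.symm⟩
  set m' : ℕ := m - (b - a) with hm'def
  have hm'pos : 0 < m' := by omega
  have hm'lt : m' < m := by omega
  have hm'a : a ≤ m' - 1 := by omega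
  have hm'2 : 2 ≤ m' := by omega
  haveI : NeZero m' := ⟨hm'pos.ne'⟩
  set f' : ZMod m' → G.D := fun k =>
    if k.val < a then f₁ ((k.val : ℕ) : ZMod m) else f₁ ((k.val + (b - a) : ℕ) : ZMod m)
    with hf'def
  have hf'lt : ∀ k : ZMod m', k.val < a → f' k = f₁ ((k.val : ℕ) : ZMod m) :=
    fun k hk => if_pos hk
  have hf'ge : ∀ k : ZMod m', ¬ k.val < a → f' k = f₁ ((k.val + (b - a) : ℕ) : ZMod m) :=
    fun k hk => if_neg hk
  have hcast1 : ∀ t : ℕ, ((t : ℕ) : ZMod m) + 1 = ((t + 1 : ℕ) : ZMod m) := by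
    intro t; push_cast; ring
  -- step property
  have hstep' : ∀ k : ZMod m', G.vert (f' (k + 1)) = G.vert (G.edge (f' k)) := by
    intro k
    have hkv : k.val < m' := ZMod.val_lt k
    by_cases hend : k.val + 1 = m'
    · have h1 : (k + 1).val = 0 := by rw [zmod_val_succ hm'2 k, if_pos hend]
      have e1 : f' (k + 1) = f₁ ((0 : ℕ) : ZMod m) := by
        rw [hf'lt (k + 1) (by omega), h1]
      have e2 : f' k = f₁ ((m - 1 : ℕ) : ZMod m) := by
        rw [hf'ge k (by omega), show k.val + (b - a) = m - 1 from by omega]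
      rw [e1, e2]
      have hst := hstep1 ((m - 1 : ℕ) : ZMod m)
      rw [hcast1 (m - 1), show (m - 1) + 1 = m from by omega, ZMod.natCast_self,
        show (0 : ZMod m) = ((0 : ℕ) : ZMod m) from by push_cast; ring] at hst
      exact hst
    · have h1 : (k + 1).val = k.val + 1 := by rw [zmod_val_succ hm'2 k, if_neg hend]
      by_cases hjun : k.val + 1 = a
      · have e1 : f' (k + 1) = f₁ ((b : ℕ) : ZMod m) := by
          rw [hf'ge (k + 1) (by omega), h1, hjun, show a + (b - a) = b from by omega]
        have e2 : f' k = f₁ ((k.val : ℕ) : ZMod m) := by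
          rw [hf'lt k (by omega)]
        rw [e1, e2, ← hrep]
        have hst := hstep1 ((k.val : ℕ) : ZMod m)
        rw [hcast1 k.val, hjun] at hst
        exact hst
      · by_cases hlt : k.val + 1 < a
        · have e1 : f' (k + 1) = f₁ ((k.val + 1 : ℕ) : ZMod m) := by
            rw [hf'lt (k + 1) (by omega), h1]
          have e2 : f' k = f₁ ((k.val : ℕ) : ZMod m) := by
            rw [hf'lt k (by omega)]
          rw [e1, e2]
          have hst := hstep1 ((k.val : ℕ) : ZMod m)
          rw [hcast1 k.val] at hst
          exact hst
        · have hge : a ≤ k.val := by omega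
          have e1 : f' (k + 1) = f₁ ((k.val + 1 + (b - a) : ℕ) : ZMod m) := by
            rw [hf'ge (k + 1) (by omega), h1]
          have e2 : f' k = f₁ ((k.val + (b - a) : ℕ) : ZMod m) := by
            rw [hf'ge k (by omega)]
          rw [e1, e2]
          have hst := hstep1 ((k.val + (b - a) : ℕ) : ZMod m)
          rw [hcast1 (k.val + (b - a)), show k.val + (b - a) + 1 = k.val + 1 + (b - a) from by omega] at hst
          exact hst
  -- injectivity
  have hinj' : ∀ k1 k2 : ZMod m', (f' k1 = f' k2 ∨ f' k1 = G.edge (f' k2)) → k1 = k2 := by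
    intro k1 k2 h
    have hk1 : k1.val < m' := ZMod.val_lt k1
    have hk2 : k2.val < m' := ZMod.val_lt k2
    have key : ∀ t1 t2 : ℕ, t1 < m → t2 < m →
        ((t1 : ZMod m) = (t2 : ZMod m)) → t1 = t2 := by
      intro t1 t2 ht1 ht2 hteq
      have := congrArg ZMod.val hteq
      rwa [ZMod.val_cast_of_lt ht1, ZMod.val_cast_of_lt ht2] at this
    by_cases h1 : k1.val < a <;> by_cases h2 : k2.val < a
    · rw [hf'lt k1 h1, hf'lt k2 h2] at h
      have := key _ _ (by omega) (by omega) (hinj1 _ _ h)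
      exact ZMod.val_injective m' this
    · rw [hf'lt k1 h1, hf'ge k2 h2] at h
      have := key _ _ (by omega) (by omega) (hinj1 _ _ h)
      omega
    · rw [hf'ge k1 h1, hf'lt k2 h2] at h
      have := key _ _ (by omega) (by omega) (hinj1 _ _ h)
      omega
    · rw [hf'ge k1 h1, hf'ge k2 h2] at h
      have := key _ _ (by omega) (by omega) (hinj1 _ _ h)
      exact ZMod.val_injective m' (by omega)
  -- X is passed exactly at 0
  have hX0 : G.vert (f' 0) = X := by
    rw [hf'lt 0 (by rw [ZMod.val_zero]; omega), ZMod.val_zero,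
      show ((0 : ℕ) : ZMod m) = (0 : ZMod m) from by push_cast; ring]
    exact (hu0 0).2 rfl
  have hXu' : ∀ y : ZMod m', G.vert (f' y) = X → y = 0 := by
    intro y hy
    have hyv : y.val < m' := ZMod.val_lt y
    by_cases h1 : y.val < a
    · rw [hf'lt y h1] at hy
      have := (hu0 _).1 hy
      have h2 : y.val = 0 := (natCast_zero_iff (by omega)).1 this
      exact ZMod.val_injective m' (by rw [h2, ZMod.val_zero])
    · rw [hf'ge y h1] at hy
      have := (hu0 _).1 hy
      have h2 : y.val + (b - a) = 0 := (natCast_zero_iff (by omega)).1 this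
      omega
  refine ⟨m', f', hm'lt, ⟨hm'pos, hstep', hinj'⟩, ⟨⟨0, hX0, hXu'⟩, ?_⟩, ?_⟩
  · intro k hk
    have hk0 : k = 0 := hXu' k hk
    subst hk0
    -- f' 0 = opp (edge (f' (0 - 1)))
    have hval : (0 - 1 : ZMod m').val = m' - 1 := by
      rw [← natCast_pred hm'pos, ZMod.val_cast_of_lt (by omega)]
    have e0 : f' 0 = f₁ 0 := by
      rw [hf'lt 0 (by rw [ZMod.val_zero]; omega), ZMod.val_zero]
      norm_num
    have e1 : f' (0 - 1) = f₁ (0 - 1 : ZMod m) := by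
      rw [hf'ge (0 - 1) (by omega), hval,
        show m' - 1 + (b - a) = m - 1 from by omega, natCast_pred hm]
    rw [e0, e1]
    have := htr1 0 ((hu0 0).2 rfl)
    exact this
  · intro k
    by_cases h1 : k.val < a
    · rw [hf'lt k h1, hpt]
      exact ⟨_, rfl⟩
    · rw [hf'ge k h1, hpt]
      exact ⟨_, rfl⟩

end FramedGraph


namespace FramedGraph

variable {G : FramedGraph}

lemma chain_fwd {m : ℕ} (hm : 0 < m) (f : ZMod m → G.D) (S : Set G.D) (X : G.V)
    (hfS : ∀ i, f i ∈ S) (hfeS : ∀ i, G.edge (f i) ∈ S)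
    (hstep : ∀ i, G.vert (f (i + 1)) = G.vert (G.edge (f i)))
    (hfne : ∀ i j, f i ≠ G.edge (f j))
    (hsdeg : ∀ i : ZMod m, G.vert (f i) ≠ X → sdeg G S (G.vert (f i)) = 2)
    (i₀ : ZMod m) (hXu : ∀ i, G.vert (f i) = X ↔ i = i₀) :
    ∀ t : ℕ, t < m →
      Relation.ReflTransGen (PassThrough G S) (f i₀) (f (i₀ + ((t : ℕ) : ZMod m))) := by
  haveI : NeZero m := ⟨hm.ne'⟩
  intro t
  induction t with
  | zero =>
    intro _
    rw [show i₀ + ((0 : ℕ) : ZMod m) = i₀ from by push_cast; ring]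
  | succ t ih =>
    intro ht
    refine (ih (by omega)).tail ?_
    have hidx : i₀ + (((t + 1 : ℕ)) : ZMod m) = (i₀ + ((t : ℕ) : ZMod m)) + 1 := by
      push_cast; ring
    have hvne : G.vert (f (i₀ + (((t + 1 : ℕ)) : ZMod m))) ≠ X := by
      intro hX
      have h := (hXu _).1 hX
      have h2 : (((t + 1 : ℕ)) : ZMod m) = 0 := by
        have h3 := h
        rwa [add_eq_left] at h3
      rw [natCast_zero_iff (by omega)] at h2
      omega
    refine ⟨hfeS _, ?_, hfS _, hfne _ _, ?_⟩
    · have h2 := hsdeg _ hvne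
      rw [hidx, hstep] at h2
      exact h2
    · rw [hidx]
      exact hstep _

lemma chain_bwd {m : ℕ} (hm : 0 < m) (f : ZMod m → G.D) (S : Set G.D) (X : G.V)
    (hfS : ∀ i, f i ∈ S) (hfeS : ∀ i, G.edge (f i) ∈ S)
    (hstep : ∀ i, G.vert (f (i + 1)) = G.vert (G.edge (f i)))
    (hfne : ∀ i j, f i ≠ G.edge (f j))
    (hsdeg : ∀ i : ZMod m, G.vert (f i) ≠ X → sdeg G S (G.vert (f i)) = 2)
    (i₀ : ZMod m) (hXu : ∀ i, G.vert (f i) = X ↔ i = i₀) :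
    ∀ t : ℕ, t < m →
      Relation.ReflTransGen (PassThrough G S) (G.edge (f (i₀ - 1)))
        (G.edge (f (i₀ - 1 - ((t : ℕ) : ZMod m)))) := by
  haveI : NeZero m := ⟨hm.ne'⟩
  intro t
  induction t with
  | zero =>
    intro _
    rw [show i₀ - 1 - ((0 : ℕ) : ZMod m) = i₀ - 1 from by push_cast; ring]
  | succ t ih =>
    intro ht
    refine (ih (by omega)).tail ?_
    have hvne : G.vert (f (i₀ - 1 - ((t : ℕ) : ZMod m))) ≠ X := by
      intro hX
      have h := (hXu _).1 hX
      have h2 : (((t + 1 : ℕ)) : ZMod m) = 0 := by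
        push_cast
        linear_combination - h
      rw [natCast_zero_iff (by omega)] at h2
      omega
    have hstep2 : G.vert (f (i₀ - 1 - ((t : ℕ) : ZMod m))) =
        G.vert (G.edge (f (i₀ - 1 - (((t + 1 : ℕ)) : ZMod m)))) := by
      have := hstep (i₀ - 1 - (((t + 1 : ℕ)) : ZMod m))
      rw [show i₀ - 1 - (((t + 1 : ℕ)) : ZMod m) + 1 = i₀ - 1 - ((t : ℕ) : ZMod m) from by
        push_cast; ring] at this
      exact this
    refine ⟨?_, ?_, hfeS _, ?_, ?_⟩
    · rw [G.edge_invol]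
      exact hfS _
    · rw [G.edge_invol]
      exact hsdeg _ hvne
    · rw [G.edge_invol]
      exact Ne.symm (hfne _ _)
    · rw [G.edge_invol]
      exact hstep2.symm

end FramedGraph


namespace FramedGraph

lemma sminor_base {G : FramedGraph} {m₁ m₂ : ℕ} {f : ZMod m₁ → G.D} {g : ZMod m₂ → G.D}
    {X : G.V}
    (hf : IsClosedTrail G m₁ f) (hg : IsClosedTrail G m₂ g)
    (hdisj : ∀ i j, f i ≠ g j ∧ f i ≠ G.edge (g j))
    (hshare : ∀ v, (∃ i, G.vert (f i) = v) → (∃ j, G.vert (g j) = v) → v = X)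
    (hXf : PassesOnceTransversally G m₁ f X) (hXg : PassesOnceTransversally G m₂ g X)
    (hfv : ∀ i j, G.vert (f i) = G.vert (f j) → i = j)
    (hgv : ∀ i j, G.vert (g i) = G.vert (g j) → i = j) :
    SMinorOf GammaGraph G := by
  classical
  obtain ⟨hm₁, hstepf, hinjf⟩ := hf
  obtain ⟨hm₂, hstepg, hinjg⟩ := hg
  haveI : NeZero m₁ := ⟨hm₁.ne'⟩
  haveI : NeZero m₂ := ⟨hm₂.ne'⟩
  obtain ⟨⟨i₀, hi₀, hi₀u⟩, htrf⟩ := hXf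
  obtain ⟨⟨j₀, hj₀, hj₀u⟩, htrg⟩ := hXg
  -- basic disjointness facts
  have hfe : ∀ i j, f i ≠ G.edge (f j) := by
    intro i j h
    have hij := hinjf i j (Or.inr h)
    subst hij
    exact G.edge_ne (f i) h.symm
  have hge : ∀ i j, g i ≠ G.edge (g j) := by
    intro i j h
    have hij := hinjg i j (Or.inr h)
    subst hij
    exact G.edge_ne (g i) h.symm
  have hfg : ∀ i j, f i ≠ g j := fun i j => (hdisj i j).1
  have hfge : ∀ i j, f i ≠ G.edge (g j) := fun i j => (hdisj i j).2
  have hgfe : ∀ i j, g j ≠ G.edge (f i) := by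
    intro i j h
    exact hfge i j ((congrArg G.edge h).trans (G.edge_invol (f i))).symm
  have hee : ∀ i j, G.edge (f i) ≠ G.edge (g j) := by
    intro i j h
    exact hfg i j (by rw [← G.edge_invol (f i), h, G.edge_invol])
  -- the four darts at X
  have hA'X : G.vert (G.edge (f (i₀ - 1))) = X := by
    have hs := hstepf (i₀ - 1)
    rw [show i₀ - 1 + 1 = i₀ from by ring] at hs
    rw [← hs]; exact hi₀
  have hB'X : G.vert (G.edge (g (j₀ - 1))) = X := by
    have hs := hstepg (j₀ - 1)
    rw [show j₀ - 1 + 1 = j₀ from by ring] at hs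
    rw [← hs]; exact hj₀
  have htA : f i₀ = G.opp (G.edge (f (i₀ - 1))) := htrf i₀ hi₀
  have htB : g j₀ = G.opp (G.edge (g (j₀ - 1))) := htrg j₀ hj₀
  -- the subgraph
  set S : Set G.D := {d | (∃ i, f i = d) ∨ (∃ i, G.edge (f i) = d) ∨
    (∃ j, g j = d) ∨ (∃ j, G.edge (g j) = d)} with hSdef
  have hmemf : ∀ i, f i ∈ S := fun i => Or.inl ⟨i, rfl⟩
  have hmemfe : ∀ i, G.edge (f i) ∈ S := fun i => Or.inr (Or.inl ⟨i, rfl⟩)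
  have hmemg : ∀ j, g j ∈ S := fun j => Or.inr (Or.inr (Or.inl ⟨j, rfl⟩))
  have hmemge : ∀ j, G.edge (g j) ∈ S := fun j => Or.inr (Or.inr (Or.inr ⟨j, rfl⟩))
  have hSedge : ∀ d ∈ S, G.edge d ∈ S := by
    intro d hd
    simp only [hSdef, Set.mem_setOf_eq] at hd
    rcases hd with ⟨i, rfl⟩ | ⟨i, rfl⟩ | ⟨j, rfl⟩ | ⟨j, rfl⟩
    · exact hmemfe i
    · rw [G.edge_invol]; exact hmemf i
    · exact hmemge j
    · rw [G.edge_invol]; exact hmemg j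
  -- darts of S at X
  have hXdart : ∀ d ∈ S, G.vert d = X →
      d = f i₀ ∨ d = G.edge (f (i₀ - 1)) ∨ d = g j₀ ∨ d = G.edge (g (j₀ - 1)) := by
    intro d hd hdX
    simp only [hSdef, Set.mem_setOf_eq] at hd
    rcases hd with ⟨i, rfl⟩ | ⟨i, rfl⟩ | ⟨j, rfl⟩ | ⟨j, rfl⟩
    · left; rw [hi₀u i hdX]
    · right; left
      have hv : G.vert (f (i + 1)) = X := by rw [hstepf i]; exact hdX
      have h1 := hi₀u (i + 1) hv
      rw [show i = i₀ - 1 from by rw [← h1]; ring]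
    · right; right; left; rw [hj₀u j hdX]
    · right; right; right
      have hv : G.vert (g (j + 1)) = X := by rw [hstepg j]; exact hdX
      have h1 := hj₀u (j + 1) hv
      rw [show j = j₀ - 1 from by rw [← h1]; ring]
  -- pairwise distinctness
  have d12 : f i₀ ≠ G.edge (f (i₀ - 1)) := hfe _ _
  have d13 : f i₀ ≠ g j₀ := hfg _ _
  have d14 : f i₀ ≠ G.edge (g (j₀ - 1)) := hfge _ _
  have d23 : G.edge (f (i₀ - 1)) ≠ g j₀ := fun h => hgfe _ _ h.symm
  have d24 : G.edge (f (i₀ - 1)) ≠ G.edge (g (j₀ - 1)) := fun h => hee _ _ h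
  have d34 : g j₀ ≠ G.edge (g (j₀ - 1)) := hge _ _
  -- all darts at X
  have hXcover : ∀ d : G.D, G.vert d = X →
      d = f i₀ ∨ d = G.edge (f (i₀ - 1)) ∨ d = g j₀ ∨ d = G.edge (g (j₀ - 1)) := by
    intro d hd
    have h4 := G.degree_four X
    have hc := four_cover h4 (⟨f i₀, hi₀⟩ : {d : G.D // G.vert d = X})
      ⟨G.edge (f (i₀ - 1)), hA'X⟩ ⟨g j₀, hj₀⟩ ⟨G.edge (g (j₀ - 1)), hB'X⟩
      (by simp only [ne_eq, Subtype.mk.injEq]; exact d12)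
      (by simp only [ne_eq, Subtype.mk.injEq]; exact d13)
      (by simp only [ne_eq, Subtype.mk.injEq]; exact d14)
      (by simp only [ne_eq, Subtype.mk.injEq]; exact d23)
      (by simp only [ne_eq, Subtype.mk.injEq]; exact d24)
      (by simp only [ne_eq, Subtype.mk.injEq]; exact d34)
    rcases hc ⟨d, hd⟩ with h | h | h | h <;> rw [Subtype.mk.injEq] at h <;> tauto
  have hFullX : Full G S X := by
    intro d hd
    rcases hXcover d hd with rfl | rfl | rfl | rfl
    exacts [hmemf i₀, hmemfe (i₀ - 1), hmemg j₀, hmemge (j₀ - 1)]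
  have hsdegX : sdeg G S X = 4 := by
    show Nat.card {d : G.D // G.vert d = X ∧ d ∈ S} = 4
    exact card_subtype_four (f i₀) (G.edge (f (i₀ - 1))) (g j₀) (G.edge (g (j₀ - 1)))
      d12 d13 d14 d23 d24 d34
      ⟨hi₀, hmemf i₀⟩ ⟨hA'X, hmemfe _⟩ ⟨hj₀, hmemg _⟩ ⟨hB'X, hmemge _⟩
      (fun z hz => hXcover z hz.1)
  -- darts of S at an f-vertex / g-vertex
  have hedgevf : ∀ i : ZMod m₁, G.vert (G.edge (f (i - 1))) = G.vert (f i) := by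
    intro i
    have hs := hstepf (i - 1)
    rw [show i - 1 + 1 = i from by ring] at hs
    exact hs.symm
  have hedgevg : ∀ j : ZMod m₂, G.vert (G.edge (g (j - 1))) = G.vert (g j) := by
    intro j
    have hs := hstepg (j - 1)
    rw [show j - 1 + 1 = j from by ring] at hs
    exact hs.symm
  have hdartsf : ∀ i : ZMod m₁, G.vert (f i) ≠ X → ∀ d ∈ S,
      G.vert d = G.vert (f i) → d = f i ∨ d = G.edge (f (i - 1)) := by
    intro i hiX d hd hdv
    simp only [hSdef, Set.mem_setOf_eq] at hd
    rcases hd with ⟨k, rfl⟩ | ⟨k, rfl⟩ | ⟨k, rfl⟩ | ⟨k, rfl⟩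
    · left; rw [hfv k i hdv]
    · right
      have hv2 : G.vert (f (k + 1)) = G.vert (f i) := by rw [hstepf k]; exact hdv
      have hk := hfv (k + 1) i hv2
      rw [show k = i - 1 from by rw [← hk]; ring]
    · exact absurd (hshare (G.vert (f i)) ⟨i, rfl⟩ ⟨k, hdv⟩) hiX
    · have hv2 : G.vert (g (k + 1)) = G.vert (f i) := by rw [hstepg k]; exact hdv
      exact absurd (hshare (G.vert (f i)) ⟨i, rfl⟩ ⟨k + 1, hv2⟩) hiX
  have hdartsg : ∀ j : ZMod m₂, G.vert (g j) ≠ X → ∀ d ∈ S,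
      G.vert d = G.vert (g j) → d = g j ∨ d = G.edge (g (j - 1)) := by
    intro j hjX d hd hdv
    simp only [hSdef, Set.mem_setOf_eq] at hd
    rcases hd with ⟨k, rfl⟩ | ⟨k, rfl⟩ | ⟨k, rfl⟩ | ⟨k, rfl⟩
    · exact absurd (hshare (G.vert (g j)) ⟨k, hdv⟩ ⟨j, rfl⟩) hjX
    · have hv2 : G.vert (f (k + 1)) = G.vert (g j) := by rw [hstepf k]; exact hdv
      exact absurd (hshare (G.vert (g j)) ⟨k + 1, hv2⟩ ⟨j, rfl⟩) hjX
    · left; rw [hgv k j hdv]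
    · right
      have hv2 : G.vert (g (k + 1)) = G.vert (g j) := by rw [hstepg k]; exact hdv
      have hk := hgv (k + 1) j hv2
      rw [show k = j - 1 from by rw [← hk]; ring]
  have hsdegf : ∀ i : ZMod m₁, G.vert (f i) ≠ X → sdeg G S (G.vert (f i)) = 2 := by
    intro i hiX
    show Nat.card {d : G.D // G.vert d = G.vert (f i) ∧ d ∈ S} = 2
    exact card_subtype_two (f i) (G.edge (f (i - 1))) (hfe _ _) ⟨rfl, hmemf i⟩
      ⟨hedgevf i, hmemfe _⟩ (fun z hz => hdartsf i hiX z hz.2 hz.1)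
  have hsdegg : ∀ j : ZMod m₂, G.vert (g j) ≠ X → sdeg G S (G.vert (g j)) = 2 := by
    intro j hjX
    show Nat.card {d : G.D // G.vert d = G.vert (g j) ∧ d ∈ S} = 2
    exact card_subtype_two (g j) (G.edge (g (j - 1))) (hge _ _) ⟨rfl, hmemg j⟩
      ⟨hedgevg j, hmemge _⟩ (fun z hz => hdartsg j hjX z hz.2 hz.1)
  -- even degrees
  have hEven : ∀ v, Even (sdeg G S v) := by
    intro v
    by_cases hvX : v = X
    · rw [hvX, hsdegX]; exact ⟨2, rfl⟩
    by_cases hvf : ∃ i, G.vert (f i) = v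
    · obtain ⟨i, rfl⟩ := hvf
      rw [hsdegf i hvX]; exact ⟨1, rfl⟩
    by_cases hvg : ∃ j, G.vert (g j) = v
    · obtain ⟨j, rfl⟩ := hvg
      rw [hsdegg j hvX]; exact ⟨1, rfl⟩
    · have h0 : sdeg G S v = 0 := by
        show Nat.card {d : G.D // G.vert d = v ∧ d ∈ S} = 0
        apply card_subtype_zero
        rintro z ⟨hzv, hz⟩
        simp only [hSdef, Set.mem_setOf_eq] at hz
        rcases hz with ⟨k, rfl⟩ | ⟨k, rfl⟩ | ⟨k, rfl⟩ | ⟨k, rfl⟩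
        · exact hvf ⟨k, hzv⟩
        · exact hvf ⟨k + 1, by rw [hstepf k]; exact hzv⟩
        · exact hvg ⟨k, hzv⟩
        · exact hvg ⟨k + 1, by rw [hstepg k]; exact hzv⟩
      rw [h0]; exact ⟨0, rfl⟩
  -- only X is full
  have hFullOnly : ∀ v, Full G S v → v = X := by
    intro v hFull
    by_contra hvX
    have h4 := G.degree_four v
    by_cases hvf : ∃ i, G.vert (f i) = v
    · obtain ⟨i, rfl⟩ := hvf
      obtain ⟨z, hz1, hz2⟩ := exists_ne_ne h4
        (⟨f i, rfl⟩ : {d : G.D // G.vert d = G.vert (f i)}) ⟨G.edge (f (i - 1)), hedgevf i⟩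
      have hzS := hFull z.1 z.2
      rcases hdartsf i hvX z.1 hzS z.2 with h | h
      · exact hz1 (Subtype.ext h)
      · exact hz2 (Subtype.ext h)
    by_cases hvg : ∃ j, G.vert (g j) = v
    · obtain ⟨j, rfl⟩ := hvg
      obtain ⟨z, hz1, hz2⟩ := exists_ne_ne h4
        (⟨g j, rfl⟩ : {d : G.D // G.vert d = G.vert (g j)}) ⟨G.edge (g (j - 1)), hedgevg j⟩
      have hzS := hFull z.1 z.2
      rcases hdartsg j hvX z.1 hzS z.2 with h | h
      · exact hz1 (Subtype.ext h)
      · exact hz2 (Subtype.ext h)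
    · have hne : Nonempty {d : G.D // G.vert d = v} := by
        by_contra hcon
        rw [not_nonempty_iff] at hcon
        rw [Nat.card_of_isEmpty] at h4
        omega
      obtain ⟨⟨z, hzv⟩⟩ := hne
      have hzS := hFull z hzv
      simp only [hSdef, Set.mem_setOf_eq] at hzS
      rcases hzS with ⟨k, rfl⟩ | ⟨k, rfl⟩ | ⟨k, rfl⟩ | ⟨k, rfl⟩
      · exact hvf ⟨k, hzv⟩
      · exact hvf ⟨k + 1, by rw [hstepf k]; exact hzv⟩
      · exact hvg ⟨k, hzv⟩
      · exact hvg ⟨k + 1, by rw [hstepg k]; exact hzv⟩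
  -- the embedding of Γ
  set ι : ZMod 4 → G.D := fun d => if d = 0 then f i₀ else if d = 1 then G.edge (f (i₀ - 1))
    else if d = 2 then g j₀ else G.edge (g (j₀ - 1)) with hιdef
  have hι0 : ι 0 = f i₀ := if_pos rfl
  have hι1 : ι 1 = G.edge (f (i₀ - 1)) := by
    show (if (1 : ZMod 4) = 0 then f i₀ else if (1 : ZMod 4) = 1 then G.edge (f (i₀ - 1))
      else if (1 : ZMod 4) = 2 then g j₀ else G.edge (g (j₀ - 1))) = G.edge (f (i₀ - 1))
    rw [if_neg (by decide : ¬ (1 : ZMod 4) = 0), if_pos rfl]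
  have hι2 : ι 2 = g j₀ := by
    show (if (2 : ZMod 4) = 0 then f i₀ else if (2 : ZMod 4) = 1 then G.edge (f (i₀ - 1))
      else if (2 : ZMod 4) = 2 then g j₀ else G.edge (g (j₀ - 1))) = g j₀
    rw [if_neg (by decide : ¬ (2 : ZMod 4) = 0), if_neg (by decide : ¬ (2 : ZMod 4) = 1),
      if_pos rfl]
  have hι3 : ι 3 = G.edge (g (j₀ - 1)) := by
    show (if (3 : ZMod 4) = 0 then f i₀ else if (3 : ZMod 4) = 1 then G.edge (f (i₀ - 1))
      else if (3 : ZMod 4) = 2 then g j₀ else G.edge (g (j₀ - 1))) = G.edge (g (j₀ - 1))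
    rw [if_neg (by decide : ¬ (3 : ZMod 4) = 0), if_neg (by decide : ¬ (3 : ZMod 4) = 1),
      if_neg (by decide : ¬ (3 : ZMod 4) = 2)]
  have h4' : ∀ w : ZMod 4, w = 0 ∨ w = 1 ∨ w = 2 ∨ w = 3 := by decide
  have hvertι : ∀ w : ZMod 4, G.vert (ι w) = X := by
    intro w
    rcases h4' w with rfl | rfl | rfl | rfl
    · rw [hι0]; exact hi₀
    · rw [hι1]; exact hA'X
    · rw [hι2]; exact hj₀
    · rw [hι3]; exact hB'X
  have hXuf : ∀ i, G.vert (f i) = X ↔ i = i₀ := fun i => ⟨hi₀u i, fun h => by rw [h]; exact hi₀⟩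
  have hXug : ∀ j, G.vert (g j) = X ↔ j = j₀ := fun j => ⟨hj₀u j, fun h => by rw [h]; exact hj₀⟩
  refine ⟨S, ι, hSedge, hEven, ?_, ?_, ?_, ?_, ?_, ?_⟩
  · -- injectivity
    intro d d' h
    rcases h4' d with rfl | rfl | rfl | rfl <;> rcases h4' d' with rfl | rfl | rfl | rfl
    · rfl
    · rw [hι0, hι1] at h; exact absurd h d12
    · rw [hι0, hι2] at h; exact absurd h d13
    · rw [hι0, hι3] at h; exact absurd h d14
    · rw [hι1, hι0] at h; exact absurd h d12.symm
    · rfl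
    · rw [hι1, hι2] at h; exact absurd h d23
    · rw [hι1, hι3] at h; exact absurd h d24
    · rw [hι2, hι0] at h; exact absurd h d13.symm
    · rw [hι2, hι1] at h; exact absurd h d23.symm
    · rfl
    · rw [hι2, hι3] at h; exact absurd h d34
    · rw [hι3, hι0] at h; exact absurd h d14.symm
    · rw [hι3, hι1] at h; exact absurd h d24.symm
    · rw [hι3, hι2] at h; exact absurd h d34.symm
    · rfl
  · intro d
    rcases h4' d with rfl | rfl | rfl | rfl
    · exact ⟨by rw [hι0]; exact hmemf i₀, by rw [hι0, hi₀]; exact hFullX⟩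
    · exact ⟨by rw [hι1]; exact hmemfe _, by rw [hι1, hA'X]; exact hFullX⟩
    · exact ⟨by rw [hι2]; exact hmemg j₀, by rw [hι2, hj₀]; exact hFullX⟩
    · exact ⟨by rw [hι3]; exact hmemge _, by rw [hι3, hB'X]; exact hFullX⟩
  · intro e heS hFulle
    have hvX : G.vert e = X := hFullOnly _ hFulle
    rcases hXdart e heS hvX with rfl | rfl | rfl | rfl
    exacts [⟨0, hι0⟩, ⟨1, hι1⟩, ⟨2, hι2⟩, ⟨3, hι3⟩]
  · intro d d'
    exact ⟨fun _ => by rw [hvertι d, hvertι d'], fun _ => rfl⟩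
  · intro d
    rcases h4' d with rfl | rfl | rfl | rfl
    · rw [show GammaGraph.opp (0 : ZMod 4) = (1 : ZMod 4) from rfl, hι1, hι0]
      exact ((congrArg G.opp htA).trans (G.opp_invol _)).symm
    · rw [show GammaGraph.opp (1 : ZMod 4) = (0 : ZMod 4) from rfl, hι0, hι1]
      exact htA
    · rw [show GammaGraph.opp (2 : ZMod 4) = (3 : ZMod 4) from rfl, hι3, hι2]
      exact ((congrArg G.opp htB).trans (G.opp_invol _)).symm
    · rw [show GammaGraph.opp (3 : ZMod 4) = (2 : ZMod 4) from rfl, hι2, hι3]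
      exact htB
  · intro d
    rcases h4' d with rfl | rfl | rfl | rfl
    · -- follow f forwards
      have hch := chain_fwd hm₁ f S X hmemf hmemfe hstepf hfe hsdegf i₀ hXuf (m₁ - 1) (by omega)
      have hidx : i₀ + ((m₁ - 1 : ℕ) : ZMod m₁) = i₀ - 1 := by rw [natCast_pred hm₁]; ring
      refine ⟨f (i₀ - 1), ?_, hmemfe _, ?_, ?_⟩
      · rw [hι0, ← hidx]; exact hch
      · rw [hA'X]; exact hFullX
      · rw [show GammaGraph.edge (0 : ZMod 4) = (1 : ZMod 4) from rfl, hι1]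
    · -- follow f backwards
      have hch := chain_bwd hm₁ f S X hmemf hmemfe hstepf hfe hsdegf i₀ hXuf (m₁ - 1) (by omega)
      have hidx : i₀ - 1 - ((m₁ - 1 : ℕ) : ZMod m₁) = i₀ := by rw [natCast_pred hm₁]; ring
      refine ⟨G.edge (f i₀), ?_, ?_, ?_, ?_⟩
      · rw [hidx] at hch
        rw [hι1]; exact hch
      · rw [G.edge_invol]; exact hmemf i₀
      · rw [G.edge_invol, hi₀]; exact hFullX
      · rw [show GammaGraph.edge (1 : ZMod 4) = (0 : ZMod 4) from rfl, hι0, G.edge_invol]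
    · have hch := chain_fwd hm₂ g S X hmemg hmemge hstepg hge hsdegg j₀ hXug (m₂ - 1) (by omega)
      have hidx : j₀ + ((m₂ - 1 : ℕ) : ZMod m₂) = j₀ - 1 := by rw [natCast_pred hm₂]; ring
      refine ⟨g (j₀ - 1), ?_, hmemge _, ?_, ?_⟩
      · rw [hι2, ← hidx]; exact hch
      · rw [hB'X]; exact hFullX
      · rw [show GammaGraph.edge (2 : ZMod 4) = (3 : ZMod 4) from rfl, hι3]
    · have hch := chain_bwd hm₂ g S X hmemg hmemge hstepg hge hsdegg j₀ hXug (m₂ - 1) (by omega)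
      have hidx : j₀ - 1 - ((m₂ - 1 : ℕ) : ZMod m₂) = j₀ := by rw [natCast_pred hm₂]; ring
      refine ⟨G.edge (g j₀), ?_, ?_, ?_, ?_⟩
      · rw [hidx] at hch
        rw [hι3]; exact hch
      · rw [G.edge_invol]; exact hmemg j₀
      · rw [G.edge_invol, hj₀]; exact hFullX
      · rw [show GammaGraph.edge (3 : ZMod 4) = (2 : ZMod 4) from rfl, hι2, G.edge_invol]

end FramedGraph


namespace FramedGraph

lemma sminor_main : ∀ (N : ℕ) (G : FramedGraph) (m₁ m₂ : ℕ) (f : ZMod m₁ → G.D)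
    (g : ZMod m₂ → G.D) (X : G.V), m₁ + m₂ ≤ N →
    IsClosedTrail G m₁ f → IsClosedTrail G m₂ g →
    (∀ i j, f i ≠ g j ∧ f i ≠ G.edge (g j)) →
    (∀ v, (∃ i, G.vert (f i) = v) → (∃ j, G.vert (g j) = v) → v = X) →
    PassesOnceTransversally G m₁ f X → PassesOnceTransversally G m₂ g X →
    SMinorOf GammaGraph G := by
  intro N
  induction N with
  | zero =>
    intro G m₁ m₂ f g X hN hf _ _ _ _ _
    have := hf.1
    omega
  | succ N ih =>
    intro G m₁ m₂ f g X hN hf hg hdisj hshare hXf hXg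
    by_cases hfv : ∀ i j : ZMod m₁, G.vert (f i) = G.vert (f j) → i = j
    · by_cases hgv : ∀ i j : ZMod m₂, G.vert (g i) = G.vert (g j) → i = j
      · exact sminor_base hf hg hdisj hshare hXf hXg hfv hgv
      · push_neg at hgv
        obtain ⟨i, j, hv, hij⟩ := hgv
        obtain ⟨m₂', g', hlt, hg', hXg', hsub⟩ := trail_shorten hg hXg hij hv
        refine ih G m₁ m₂' f g' X (by omega) hf hg' ?_ ?_ hXf hXg'
        · intro i j
          obtain ⟨k, hk⟩ := hsub j
          rw [hk]
          exact hdisj i k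
        · intro v h1 h2
          obtain ⟨j, hj⟩ := h2
          obtain ⟨k, hk⟩ := hsub j
          exact hshare v h1 ⟨k, by rw [← hk]; exact hj⟩
    · push_neg at hfv
      obtain ⟨i, j, hv, hij⟩ := hfv
      obtain ⟨m₁', f', hlt, hf', hXf', hsub⟩ := trail_shorten hf hXf hij hv
      refine ih G m₁' m₂ f' g X (by omega) hf' hg ?_ ?_ hXf' hXg
      · intro i j
        obtain ⟨k, hk⟩ := hsub i
        rw [hk]
        exact hdisj k j
      · intro v h1 h2
        obtain ⟨i, hi⟩ := h1
        obtain ⟨k, hk⟩ := hsub i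
        exact hshare v ⟨k, by rw [← hk]; exact hi⟩ h2

end FramedGraph

/-- If a framed 4-graph contains two edge-disjoint cycles
sharing exactly one vertex, at which both cross transversally, then it
contains `Γ` as an s-minor; in particular `Γ` is an s-minor of `Δ` but not a
minor of `Δ`. -/
theorem two_transverse_cycles_gamma_sminor :
    (∀ (G : FramedGraph) (m₁ m₂ : ℕ) (f : ZMod m₁ → G.D) (g : ZMod m₂ → G.D)
        (X : G.V),
      IsClosedTrail G m₁ f → IsClosedTrail G m₂ g →
      (∀ i j, f i ≠ g j ∧ f i ≠ G.edge (g j)) →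
      (∀ v, (∃ i, G.vert (f i) = v) → (∃ j, G.vert (g j) = v) → v = X) →
      PassesOnceTransversally G m₁ f X → PassesOnceTransversally G m₂ g X →
      SMinorOf GammaGraph G) ∧
    SMinorOf GammaGraph DeltaGraph ∧ ¬ MinorOf GammaGraph DeltaGraph := by
  refine ⟨?_, sminor_gamma_delta, not_minor_gamma_delta⟩
  intro G m₁ m₂ f g X hf hg hdisj hshare hXf hXg
  exact FramedGraph.sminor_main (m₁ + m₂) G m₁ m₂ f g X le_rfl hf hg hdisj hshare hXf hXg
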